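/- Let V be the space of symmetric n×n real matrices, and for a positive definite g = (g_{ij}) ∈ V define the DeWitt metric on T_g V ≅ V by G(h,k) = (1/2)(g^{ik}g^{jl} + g^{il}g^{jk})h_{ij}k_{kl} - g^{ij}g^{kl}h_{ij}k_{kl} (indices raised with the inverse g^{ij}). Then for n ≥ 2 the DeWitt metric is a nondegenerate bilinear form of Lorentzian signature (1, n(n+1)/2 - 1): it is negative definite on the one-dimensional subspace spanned by g itself, and positive definite on the trace-free complement {h : g^{ij}h_{ij} = 0}. -/

import Mathlib

/-- The DeWitt metric at a positive definite symmetric matrix `g`, evaluated on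
symmetric matrices `h`, `k`:
`G(h,k) = (1/2)(g^{ik}g^{jl}+g^{il}g^{jk})h_{ij}k_{kl} - g^{ij}g^{kl}h_{ij}k_{kl}`
`       = tr(g⁻¹ h g⁻¹ k) - tr(g⁻¹ h) tr(g⁻¹ k)` (for symmetric `h`, `k`). -/
noncomputable def DeWitt {n : ℕ} (g h k : Matrix (Fin n) (Fin n) ℝ) : ℝ :=
  Matrix.trace (g⁻¹ * h * g⁻¹ * k) - Matrix.trace (g⁻¹ * h) * Matrix.trace (g⁻¹ * k)

open Matrix in
/-- `tr(M Mᵀ) = Σ M_{ij}²` is positive for `M ≠ 0`. -/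
lemma trace_mul_transpose_pos {n : ℕ} {M : Matrix (Fin n) (Fin n) ℝ} (hM : M ≠ 0) :
    0 < Matrix.trace (M * Mᵀ) := by
  have htr : Matrix.trace (M * Mᵀ) = ∑ i, ∑ j, (M i j) ^ 2 := by
    simp [Matrix.trace, Matrix.mul_apply, Matrix.diag, sq]
  rw [htr]
  obtain ⟨i, j, hij⟩ : ∃ i j, M i j ≠ 0 := by
    by_contra hc
    push_neg at hc
    exact hM (by ext i j; simp [hc])
  refine Finset.sum_pos' (fun i _ => Finset.sum_nonneg fun j _ => sq_nonneg _) ⟨i, Finset.mem_univ i, ?_⟩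
  exact Finset.sum_pos' (fun j _ => sq_nonneg _) ⟨j, Finset.mem_univ j, by positivity⟩

open Matrix in
/-- Key positivity: for `P` positive definite and `h` symmetric nonzero,
`tr(P h P h) > 0`. -/
lemma trace_PhPh_pos {n : ℕ} {P h : Matrix (Fin n) (Fin n) ℝ}
    (hP : P.PosDef) (hh : h.IsSymm) (h0 : h ≠ 0) :
    0 < Matrix.trace (P * h * P * h) := by
  obtain ⟨r, hrsym, hrr⟩ : ∃ r : Matrix (Fin n) (Fin n) ℝ, rᵀ = r ∧ r * r = P := by
    open scoped MatrixOrder in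
    refine ⟨CFC.sqrt P, ?_, CFC.sqrt_mul_sqrt_self P hP.posSemidef.nonneg⟩
    open scoped MatrixOrder in
    have h1 := Matrix.IsHermitian.eq (CFC.sqrt_nonneg P).posSemidef.1
    rwa [Matrix.conjTranspose_eq_transpose_of_trivial] at h1
  have hrdet : IsUnit r.det := by
    have hPdet : IsUnit P.det := isUnit_iff_ne_zero.mpr hP.det_pos.ne'
    rw [← hrr, Matrix.det_mul] at hPdet
    exact (IsUnit.mul_iff.mp hPdet).1
  set m := r * h * r with hm
  have hmne : m ≠ 0 := by
    intro hz
    apply h0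
    have hrec : r⁻¹ * m * r⁻¹ = h := by
      rw [hm, ← Matrix.mul_assoc, ← Matrix.mul_assoc,
        Matrix.nonsing_inv_mul r hrdet, Matrix.one_mul, Matrix.mul_assoc,
        Matrix.mul_nonsing_inv r hrdet, Matrix.mul_one]
    rw [← hrec, hz, Matrix.mul_zero, Matrix.zero_mul]
  have htr : Matrix.trace (P * h * P * h) = Matrix.trace (m * m) := by
    rw [← hrr, hm]
    rw [show r * r * h * (r * r) * h = r * (r * h * r * (r * h)) by
      simp only [Matrix.mul_assoc]]
    rw [Matrix.trace_mul_comm]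
    congr 1
    simp only [Matrix.mul_assoc]
  have hmt : mᵀ = m := by
    rw [hm, Matrix.transpose_mul, Matrix.transpose_mul, hrsym, hh.eq]
    simp [Matrix.mul_assoc]
  rw [htr]
  calc (0:ℝ) < Matrix.trace (m * mᵀ) := trace_mul_transpose_pos hmne
    _ = Matrix.trace (m * m) := by rw [hmt]

theorem deWitt_lorentzian_signature
    (n : ℕ) (hn : 2 ≤ n) (g : Matrix (Fin n) (Fin n) ℝ)
    (hg : g.PosDef) (hgsym : g.IsSymm) :
    (∀ c : ℝ, c ≠ 0 → DeWitt g (c • g) (c • g) < 0) ∧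
    (∀ h : Matrix (Fin n) (Fin n) ℝ, h.IsSymm → h ≠ 0 →
      Matrix.trace (g⁻¹ * h) = 0 → 0 < DeWitt g h h) ∧
    (∀ h : Matrix (Fin n) (Fin n) ℝ, h.IsSymm →
      Matrix.trace (g⁻¹ * h) = 0 → DeWitt g g h = 0) ∧
    (∀ h : Matrix (Fin n) (Fin n) ℝ, h.IsSymm →
      (∀ k : Matrix (Fin n) (Fin n) ℝ, k.IsSymm → DeWitt g h k = 0) → h = 0) := by
  have hdet : IsUnit g.det := isUnit_iff_ne_zero.mpr hg.det_pos.ne'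
  have hinv : g⁻¹ * g = 1 := Matrix.nonsing_inv_mul g hdet
  have hN : (Fintype.card (Fin n) : ℝ) = (n : ℝ) := by simp
  refine ⟨?_, ?_, ?_, ?_⟩
  · intro c hc
    have : DeWitt g (c • g) (c • g) = c ^ 2 * ((n : ℝ) - (n : ℝ) * (n : ℝ)) := by
      unfold DeWitt
      simp only [Matrix.mul_smul, Matrix.smul_mul, hinv, Matrix.one_mul,
        Matrix.trace_smul, Matrix.trace_one, smul_eq_mul, hN]
      ring
    rw [this]
    have h1 : (0:ℝ) < c ^ 2 := by positivity
    have h2 : (n : ℝ) - (n : ℝ) * (n : ℝ) < 0 := by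
      have : (2:ℝ) ≤ (n:ℝ) := by exact_mod_cast hn
      nlinarith
    nlinarith
  · intro h hsym h0 htr
    unfold DeWitt
    rw [htr, mul_zero, sub_zero]
    exact trace_PhPh_pos hg.inv hsym h0
  · intro h hsym htr
    unfold DeWitt
    rw [Matrix.mul_assoc g⁻¹ g g⁻¹, Matrix.mul_nonsing_inv g hdet, Matrix.mul_one,
      hinv, htr]
    simp
  · intro h hsym hall
    have h1 := hall g hgsym
    unfold DeWitt at h1
    rw [Matrix.mul_assoc, hinv, Matrix.mul_one, Matrix.trace_one, hN] at h1
    have htr0 : Matrix.trace (g⁻¹ * h) = 0 := by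
      have hne : (1:ℝ) - (n:ℝ) ≠ 0 := by
        have : (2:ℝ) ≤ (n:ℝ) := by exact_mod_cast hn
        nlinarith
      have : Matrix.trace (g⁻¹ * h) * (1 - (n:ℝ)) = 0 := by
        rw [show Matrix.trace (g⁻¹ * h) * (1 - (n:ℝ))
          = Matrix.trace (g⁻¹ * h) - Matrix.trace (g⁻¹ * h) * (n:ℝ) by ring, h1]
      exact (mul_eq_zero.mp this).resolve_right hne
    by_contra h0
    have h2 := hall h hsym
    unfold DeWitt at h2
    rw [htr0, mul_zero, sub_zero] at h2
    exact absurd h2 (ne_of_gt (trace_PhPh_pos hg.inv hsym h0))
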